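/- Let p be an odd prime, k ∈ F_p with k ≠ 0, and let f be a monic irreducible polynomial of degree n ≥ 1 over F_p. Then either f^{Q_k} is a monic irreducible polynomial of degree 2n over F_p, or f^{Q_k} is the product of the minimal polynomial over F_p of α and the minimal polynomial over F_p of α⁻¹ for some nonzero α ∈ F_{p^n}, both factors having degree n. -/

import Mathlib

open Polynomial Module

noncomputable def Qtransform {F : Type*} [Field F] (k : F) (f : Polynomial F) :
    Polynomial F :=
  Polynomial.C (k⁻¹ ^ f.natDegree) *
    ∑ j ∈ Finset.range (f.natDegree + 1),
      Polynomial.C (f.coeff j * k ^ j) * (Polynomial.X ^ 2 + 1) ^ j *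
        Polynomial.X ^ (f.natDegree - j)

section Aux
variable {F : Type*} [Field F]

lemma monic_dvd_eq {g q : F[X]} (hg : g.Monic) (hq : q.Monic) (hdvd : q ∣ g)
    (hdeg : g.natDegree ≤ q.natDegree) : g = q := by
  obtain ⟨u, hu⟩ := hdvd
  have hu0 : u ≠ 0 := by
    rintro rfl
    rw [mul_zero] at hu
    exact hg.ne_zero hu
  have hdeg' : g.natDegree = q.natDegree + u.natDegree := by
    rw [hu, natDegree_mul hq.ne_zero hu0]
  have hu1 : u.natDegree = 0 := by omega
  have humonic : u.Monic := hq.of_mul_monic_left (hu ▸ hg)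
  rw [hu, (Polynomial.Monic.natDegree_eq_zero humonic).mp hu1, mul_one]


lemma qt_aeval {A : Type*} [CommRing A] [Algebra F A] (k : F) (f : F[X]) {α β : A}
    (hrel : algebraMap F A k * (α ^ 2 + 1) = β * α) (hβ : aeval β f = 0) :
    aeval α (Qtransform k f) = 0 := by
  unfold Qtransform
  rw [map_mul, map_sum]
  have key : ∀ j ∈ Finset.range (f.natDegree + 1),
      aeval α (C (f.coeff j * k ^ j) * (X ^ 2 + 1) ^ j * X ^ (f.natDegree - j))
        = algebraMap F A (f.coeff j) * β ^ j * α ^ f.natDegree := by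
    intro j hj
    have hj' : j ≤ f.natDegree := Nat.lt_succ_iff.mp (Finset.mem_range.mp hj)
    have h1 : (algebraMap F A k) ^ j * (α ^ 2 + 1) ^ j = β ^ j * α ^ j := by
      rw [← mul_pow, hrel, mul_pow]
    have h2 : α ^ j * α ^ (f.natDegree - j) = α ^ f.natDegree := by
      rw [← pow_add]; congr 1; omega
    simp only [map_mul, map_pow, aeval_C, aeval_X, map_add, map_one, map_ofNat]
    calc algebraMap F A (f.coeff j) * (algebraMap F A k) ^ j * (α ^ 2 + 1) ^ j
            * α ^ (f.natDegree - j)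
        = algebraMap F A (f.coeff j) * ((algebraMap F A k) ^ j * (α ^ 2 + 1) ^ j)
            * α ^ (f.natDegree - j) := by ring
      _ = algebraMap F A (f.coeff j) * β ^ j * (α ^ j * α ^ (f.natDegree - j)) := by
            rw [h1]; ring
      _ = _ := by rw [h2]
  rw [Finset.sum_congr rfl key, ← Finset.sum_mul]
  have : (∑ j ∈ Finset.range (f.natDegree + 1), algebraMap F A (f.coeff j) * β ^ j)
      = aeval β f := by
    rw [aeval_eq_sum_range]
    exact Finset.sum_congr rfl fun j _ => by rw [Algebra.smul_def]
  rw [this, hβ, zero_mul, mul_zero]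

lemma qt_term_deg (k : F) (f : F[X]) {j : ℕ} (hj : j ≤ f.natDegree) :
    (C (f.coeff j * k ^ j) * (X ^ 2 + 1 : F[X]) ^ j * X ^ (f.natDegree - j)).natDegree
      ≤ f.natDegree + j := by
  have hX2 : ((X ^ 2 + 1 : F[X])).natDegree = 2 := by
    have : (X ^ 2 + 1 : F[X]) = X ^ 2 + C 1 := by rw [map_one]
    rw [this, natDegree_X_pow_add_C]
  calc (C (f.coeff j * k ^ j) * (X ^ 2 + 1 : F[X]) ^ j * X ^ (f.natDegree - j)).natDegree
      ≤ (C (f.coeff j * k ^ j) * (X ^ 2 + 1 : F[X]) ^ j).natDegree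
          + (X ^ (f.natDegree - j) : F[X]).natDegree := natDegree_mul_le
    _ ≤ (C (f.coeff j * k ^ j)).natDegree + ((X ^ 2 + 1 : F[X]) ^ j).natDegree
          + (X ^ (f.natDegree - j) : F[X]).natDegree :=
        Nat.add_le_add_right natDegree_mul_le _
    _ ≤ 0 + 2 * j + (f.natDegree - j) := by
        apply add_le_add (add_le_add (le_of_eq (natDegree_C _)) ?_) (natDegree_X_pow_le _)
        calc ((X ^ 2 + 1 : F[X]) ^ j).natDegree ≤ j * (X ^ 2 + 1 : F[X]).natDegree :=
              natDegree_pow_le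
          _ = 2 * j := by rw [hX2]; ring
    _ ≤ f.natDegree + j := by omega

lemma qt_monic (k : F) (hk : k ≠ 0) {f : F[X]} (hf : f.Monic) :
    (Qtransform k f).Monic ∧ (Qtransform k f).natDegree = 2 * f.natDegree := by
  have hX2 : ((X ^ 2 + 1 : F[X])).Monic := by
    have : (X ^ 2 + 1 : F[X]) = X ^ 2 + C 1 := by rw [map_one]
    rw [this]
    exact monic_X_pow_add_C 1 (by norm_num)
  have hdegX2 : ((X ^ 2 + 1 : F[X]) ^ f.natDegree).natDegree = 2 * f.natDegree := by
    rw [natDegree_pow]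
    have : (X ^ 2 + 1 : F[X]) = X ^ 2 + C 1 := by rw [map_one]
    rw [this, natDegree_X_pow_add_C]; ring
  have hS : (∑ j ∈ Finset.range (f.natDegree + 1),
      C (f.coeff j * k ^ j) * (X ^ 2 + 1 : F[X]) ^ j * X ^ (f.natDegree - j)).coeff
        (2 * f.natDegree) = k ^ f.natDegree := by
    rw [finset_sum_coeff]
    rw [Finset.sum_eq_single f.natDegree]
    · have : (C (f.coeff f.natDegree * k ^ f.natDegree) * (X ^ 2 + 1 : F[X]) ^ f.natDegree
          * X ^ (f.natDegree - f.natDegree)) =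
          C (k ^ f.natDegree) * (X ^ 2 + 1 : F[X]) ^ f.natDegree := by
        rw [hf.coeff_natDegree, one_mul, Nat.sub_self, pow_zero, mul_one]
      rw [this, coeff_C_mul]
      have h2 : ((X ^ 2 + 1 : F[X]) ^ f.natDegree).coeff (2 * f.natDegree) = 1 := by
        have := (hX2.pow f.natDegree).coeff_natDegree
        rwa [hdegX2] at this
      rw [h2, mul_one]
    · intro j hj hjn
      apply coeff_eq_zero_of_natDegree_lt
      have hj' : j ≤ f.natDegree := Nat.lt_succ_iff.mp (Finset.mem_range.mp hj)
      have := qt_term_deg k f hj'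
      omega
    · intro h; exact absurd (Finset.self_mem_range_succ f.natDegree) h
  have hdegS : (∑ j ∈ Finset.range (f.natDegree + 1),
      C (f.coeff j * k ^ j) * (X ^ 2 + 1 : F[X]) ^ j * X ^ (f.natDegree - j)).natDegree
        ≤ 2 * f.natDegree := by
    apply natDegree_sum_le_of_forall_le
    intro j hj
    have hj' : j ≤ f.natDegree := Nat.lt_succ_iff.mp (Finset.mem_range.mp hj)
    have := qt_term_deg k f hj'
    omega
  have hcoeff : (Qtransform k f).coeff (2 * f.natDegree) = 1 := by
    unfold Qtransform
    rw [coeff_C_mul, hS, inv_pow, inv_mul_cancel₀ (pow_ne_zero _ hk)]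
  have hdeg : (Qtransform k f).natDegree ≤ 2 * f.natDegree := by
    unfold Qtransform
    calc _ ≤ _ := natDegree_mul_le
    _ ≤ 2 * f.natDegree := by simpa using hdegS
  exact ⟨monic_of_natDegree_le_of_coeff_eq_one _ hdeg hcoeff,
    le_antisymm hdeg (le_natDegree_of_ne_zero (by rw [hcoeff]; exact one_ne_zero))⟩

lemma qt_coeff_zero (k : F) (hk : k ≠ 0) {f : F[X]} (hf : f.Monic) :
    (Qtransform k f).coeff 0 = 1 := by
  rw [coeff_zero_eq_eval_zero]
  unfold Qtransform
  rw [eval_mul, eval_C, eval_finset_sum]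
  have key : ∀ j ∈ Finset.range (f.natDegree + 1),
      eval 0 (C (f.coeff j * k ^ j) * (X ^ 2 + 1 : F[X]) ^ j * X ^ (f.natDegree - j))
        = if j = f.natDegree then k ^ f.natDegree else 0 := by
    intro j hj
    by_cases h : j = f.natDegree
    · subst h; simp [hf.coeff_natDegree]
    · have h2 : f.natDegree - j ≠ 0 := by
        have := Finset.mem_range.mp hj; omega
      simp [zero_pow h2, h]
  rw [Finset.sum_congr rfl key, Finset.sum_ite_eq' (Finset.range (f.natDegree + 1))]
  rw [if_pos (Finset.self_mem_range_succ f.natDegree), inv_pow,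
    inv_mul_cancel₀ (pow_ne_zero _ hk)]

end Aux
set_option maxHeartbeats 1000000 in
set_option synthInstance.maxHeartbeats 200000 in
theorem Qtransform_irreducible_or_splits (p : ℕ) [Fact p.Prime]
    (hodd : Odd p) (k : ZMod p) (hk : k ≠ 0)
    (f : Polynomial (ZMod p)) (hmonic : f.Monic) (hirr : Irreducible f)
    (hn : 1 ≤ f.natDegree) :
    ((Qtransform k f).Monic ∧ Irreducible (Qtransform k f) ∧
        (Qtransform k f).natDegree = 2 * f.natDegree) ∨
      (∃ α : GaloisField p f.natDegree, α ≠ 0 ∧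
        Qtransform k f = minpoly (ZMod p) α * minpoly (ZMod p) α⁻¹ ∧
        (minpoly (ZMod p) α).natDegree = f.natDegree ∧
        (minpoly (ZMod p) α⁻¹).natDegree = f.natDegree) := by
  classical
  obtain ⟨hgmonic, hgdeg⟩ := qt_monic k hk hmonic
  set n := f.natDegree with hn'
  have hn0 : n ≠ 0 := by omega
  haveI : Fact (Irreducible f) := ⟨hirr⟩
  have hf0 : f ≠ 0 := hmonic.ne_zero
  have hfinAR : Module.finrank (ZMod p) (AdjoinRoot f) = n := by
    rw [PowerBasis.finrank (AdjoinRoot.powerBasis hf0), AdjoinRoot.powerBasis_dim]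
  haveI : Module.Finite (ZMod p) (AdjoinRoot f) := PowerBasis.finite (AdjoinRoot.powerBasis hf0)
  haveI : Finite (AdjoinRoot f) := Module.finite_of_finite (ZMod p)
  haveI : Fintype (AdjoinRoot f) := Fintype.ofFinite _
  have hcard : Fintype.card (AdjoinRoot f) = p ^ n := by
    rw [card_eq_pow_finrank (K := ZMod p), hfinAR, ZMod.card]
  let e : AdjoinRoot f ≃ₐ[ZMod p] GaloisField p n :=
    GaloisField.algEquivGaloisFieldOfFintype p n hcard
  set β : GaloisField p n := e (AdjoinRoot.root f) with hβdef
  have hβ : aeval β f = 0 := by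
    rw [hβdef, show (e (AdjoinRoot.root f)) = e.toAlgHom (AdjoinRoot.root f) from rfl,
      aeval_algHom_apply, AdjoinRoot.aeval_eq, AdjoinRoot.mk_self, map_zero]
  have hmin : minpoly (ZMod p) β = f :=
    (minpoly.eq_of_irreducible_of_monic hirr hβ hmonic).symm
  have hKrank : Module.finrank (ZMod p) (GaloisField p n) = n := GaloisField.finrank p hn0
  have hβtop : IntermediateField.adjoin (ZMod p) {β} = ⊤ := by
    have h1 : Module.finrank (ZMod p) (IntermediateField.adjoin (ZMod p) {β}) = n := by
      rw [IntermediateField.adjoin.finrank (IsIntegral.of_finite _ _), hmin]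
    apply IntermediateField.eq_of_le_of_finrank_le le_top
    rw [h1, IntermediateField.finrank_top', hKrank]
  by_cases hA : ∃ α : GaloisField p n,
      algebraMap (ZMod p) (GaloisField p n) k * (α ^ 2 + 1) = β * α
  · right
    obtain ⟨α, hα⟩ := hA
    set k' : GaloisField p n := algebraMap (ZMod p) (GaloisField p n) k with hk'def
    have hk'0 : k' ≠ 0 := fun h =>
      hk ((algebraMap (ZMod p) (GaloisField p n)).injective (h.trans (map_zero _).symm))
    have hα0 : α ≠ 0 := by
      rintro rfl
      apply hk'0
      simpa using hα
    have hβeq : β = k' * α + k' * α⁻¹ := by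
      apply mul_right_cancel₀ hα0
      rw [add_mul, mul_assoc k' α⁻¹ α, inv_mul_cancel₀ hα0, mul_one]
      rw [← hα]; ring
    have hαinv : k' * ((α⁻¹) ^ 2 + 1) = β * α⁻¹ := by
      apply mul_right_cancel₀ (pow_ne_zero 2 hα0)
      have h1 : (α⁻¹) ^ 2 * α ^ 2 = 1 := by rw [← mul_pow, inv_mul_cancel₀ hα0, one_pow]
      have h2 : α⁻¹ * α ^ 2 = α := by rw [pow_two, ← mul_assoc, inv_mul_cancel₀ hα0, one_mul]
      calc k' * ((α⁻¹) ^ 2 + 1) * α ^ 2 = k' * ((α⁻¹) ^ 2 * α ^ 2) + k' * α ^ 2 := by ring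
        _ = k' * 1 + k' * α ^ 2 := by rw [h1]
        _ = k' * (α ^ 2 + 1) := by ring
        _ = β * α := hα
        _ = β * (α⁻¹ * α ^ 2) := by rw [h2]
        _ = β * α⁻¹ * α ^ 2 := by ring
    have hg1 : aeval α (Qtransform k f) = 0 := qt_aeval k f hα hβ
    have hg2 : aeval α⁻¹ (Qtransform k f) = 0 := qt_aeval k f hαinv hβ
    have hint1 : IsIntegral (ZMod p) α := IsIntegral.of_finite _ _
    have hint2 : IsIntegral (ZMod p) α⁻¹ := IsIntegral.of_finite _ _
    have degm : ∀ γ : GaloisField p n, β = k' * γ + k' * γ⁻¹ →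
        (minpoly (ZMod p) γ).natDegree = n := by
      intro γ hβγ
      have hγtop : IntermediateField.adjoin (ZMod p) {γ} = ⊤ := by
        apply le_antisymm le_top
        rw [← hβtop, IntermediateField.adjoin_le_iff]
        intro x hx
        rw [Set.mem_singleton_iff] at hx
        subst hx
        have hγmem := IntermediateField.mem_adjoin_simple_self (ZMod p) γ
        rw [hβγ]
        exact add_mem (mul_mem (IntermediateField.algebraMap_mem _ k) hγmem)
          (mul_mem (IntermediateField.algebraMap_mem _ k) (inv_mem hγmem))
      have h3 := IntermediateField.adjoin.finrank (IsIntegral.of_finite (ZMod p) γ)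
      rw [hγtop, IntermediateField.finrank_top', hKrank] at h3
      omega
    have hdm1 : (minpoly (ZMod p) α).natDegree = n := degm α hβeq
    have hdm2 : (minpoly (ZMod p) α⁻¹).natDegree = n := degm α⁻¹ (by rw [inv_inv, hβeq]; ring)
    have hd1 : minpoly (ZMod p) α ∣ Qtransform k f := minpoly.dvd _ _ hg1
    have hd2 : minpoly (ZMod p) α⁻¹ ∣ Qtransform k f := minpoly.dvd _ _ hg2
    by_cases hsub : aeval α⁻¹ (minpoly (ZMod p) α) = 0
    · -- α⁻¹ is a root of minpoly α : show α = α⁻¹ via an automorphism fixing β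
      have hm2eq : minpoly (ZMod p) α⁻¹ = minpoly (ZMod p) α :=
        (minpoly.eq_of_irreducible_of_monic (minpoly.irreducible hint1) hsub
          (minpoly.monic hint1)).symm
      set m : (ZMod p)[X] := minpoly (ZMod p) α with hmdef
      have hm0 : m ≠ 0 := minpoly.ne_zero hint1
      haveI : Fact (Irreducible m) := ⟨minpoly.irreducible hint1⟩
      set φ : AdjoinRoot m →ₐ[ZMod p] GaloisField p n :=
        AdjoinRoot.liftAlgHom m (Algebra.ofId (ZMod p) (GaloisField p n)) α (minpoly.aeval _ _) with hφdef
      set ψ : AdjoinRoot m →ₐ[ZMod p] GaloisField p n :=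
        AdjoinRoot.liftAlgHom m (Algebra.ofId (ZMod p) (GaloisField p n)) α⁻¹ hsub with hψdef
      haveI : Module.Finite (ZMod p) (AdjoinRoot m) :=
        PowerBasis.finite (AdjoinRoot.powerBasis hm0)
      have hφbij : Function.Bijective φ := by
        have hinj : Function.Injective φ := φ.toRingHom.injective
        refine ⟨hinj, ?_⟩
        have hrange : LinearMap.range φ.toLinearMap = ⊤ := by
          apply Submodule.eq_top_of_finrank_eq
          rw [LinearMap.finrank_range_of_inj hinj,
            PowerBasis.finrank (AdjoinRoot.powerBasis hm0), AdjoinRoot.powerBasis_dim, hKrank]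
          exact hdm1
        intro y
        have hy : y ∈ LinearMap.range φ.toLinearMap := by rw [hrange]; trivial
        obtain ⟨x, hx⟩ := hy
        exact ⟨x, hx⟩
      have hφroot : φ (AdjoinRoot.root m) = α := by
        rw [hφdef]; exact AdjoinRoot.liftAlgHom_root m _ _ (minpoly.aeval _ _)
      have hψroot : ψ (AdjoinRoot.root m) = α⁻¹ := by
        rw [hψdef]; exact AdjoinRoot.liftAlgHom_root m _ _ hsub
      set eφ := AlgEquiv.ofBijective φ hφbij with heφdef
      have heφapp : ∀ x, eφ x = φ x := fun x => rfl
      have heφroot : eφ (AdjoinRoot.root m) = α := by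
        rw [heφapp]; exact hφroot
      have hσ : ∀ x, ψ (eφ.symm x) = x := by
        have hσβ : ψ (eφ.symm β) = β := by
          have hδ : eφ.symm β = algebraMap (ZMod p) (AdjoinRoot m) k *
              (AdjoinRoot.root m + (AdjoinRoot.root m)⁻¹) := by
            apply eφ.injective
            rw [AlgEquiv.apply_symm_apply, heφapp, map_mul, map_add, map_inv₀,
              AlgHom.commutes, hφroot]
            rw [hβeq]; ring
          rw [hδ, map_mul, map_add, map_inv₀, AlgHom.commutes, hψroot, inv_inv]
          rw [hβeq]; ring
        have hgen : Algebra.adjoin (ZMod p) ({β} : Set (GaloisField p n)) = ⊤ := by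
          have h4 := IntermediateField.adjoin_simple_toSubalgebra_of_isAlgebraic
            (IsIntegral.of_finite (ZMod p) β).isAlgebraic
          rw [hβtop] at h4
          rw [← h4, IntermediateField.top_toSubalgebra]
        intro x
        set σ : GaloisField p n →ₐ[ZMod p] GaloisField p n := ψ.comp eφ.symm.toAlgHom
          with hσdef
        have hle : Algebra.adjoin (ZMod p) ({β} : Set (GaloisField p n)) ≤
            AlgHom.equalizer σ (AlgHom.id (ZMod p) (GaloisField p n)) := by
          apply Algebra.adjoin_le
          intro z hz
          rw [Set.mem_singleton_iff] at hz; subst hz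
          exact hσβ
        have hx : x ∈ Algebra.adjoin (ZMod p) ({β} : Set (GaloisField p n)) := by
          rw [hgen]; trivial
        exact hle hx
      have hαfix : α⁻¹ = α := by
        have h1 : ψ (eφ.symm α) = α := hσ α
        rw [show eφ.symm α = AdjoinRoot.root m from by
          apply eφ.injective; rw [AlgEquiv.apply_symm_apply, heφroot]] at h1
        rw [hψroot] at h1
        exact h1
      have hαsq : α * α = 1 := by
        calc α * α = α * α⁻¹ := by rw [hαfix]
          _ = 1 := mul_inv_cancel₀ hα0
      have hcases : α = 1 ∨ α = -1 := by
        have h5 : (α - 1) * (α + 1) = 0 := by linear_combination hαsq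
        rcases mul_eq_zero.mp h5 with h | h
        · left; exact sub_eq_zero.mp h
        · right; exact eq_neg_of_add_eq_zero_left h
      obtain ⟨a, hamap⟩ : ∃ a : ZMod p, algebraMap (ZMod p) (GaloisField p n) a = α ∧
          a * a = 1 := by
        rcases hcases with h | h
        · exact ⟨1, by rw [map_one, h], by ring⟩
        · exact ⟨-1, by rw [map_neg, map_one, h], by ring⟩
      obtain ⟨hamap, hasq⟩ := hamap
      have hm1 : m = X - C a := by rw [hmdef, ← hamap, minpoly.eq_X_sub_C]
      have hmc0 : m.coeff 0 = -a := by simp [hm1]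
      have hn1 : n = 1 := by
        rw [← hdm1, hm1, natDegree_X_sub_C]
      obtain ⟨h, hgh⟩ := hd1
      have hhmonic : h.Monic := (minpoly.monic hint1).of_mul_monic_left (hgh ▸ hgmonic)
      have hhdeg : h.natDegree = 1 := by
        have h6 := hgdeg
        rw [hgh, natDegree_mul (minpoly.ne_zero hint1) hhmonic.ne_zero, hdm1] at h6
        omega
      have hcoeff0 : (Qtransform k f).coeff 0 = 1 := qt_coeff_zero k hk hmonic
      have hc0 : (-a) * h.coeff 0 = 1 := by
        rw [hgh, mul_coeff_zero, hmc0] at hcoeff0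
        exact hcoeff0
      have hhc : h.coeff 0 = -a := by
        calc h.coeff 0 = (a * a) * h.coeff 0 := by rw [hasq, one_mul]
          _ = (-a) * ((-a) * h.coeff 0) := by ring
          _ = (-a) * 1 := by rw [hc0]
          _ = -a := by ring
      have hhm : h = m := by
        rw [hhmonic.eq_X_add_C hhdeg, hhc, hm1, map_neg, sub_eq_add_neg]
      refine ⟨α, hα0, ?_, hdm1, hdm2⟩
      rw [hm2eq, hgh, hhm]
    · refine ⟨α, hα0, ?_, hdm1, hdm2⟩
      have hne : minpoly (ZMod p) α ≠ minpoly (ZMod p) α⁻¹ := by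
        intro h
        rw [h] at hsub
        exact hsub (minpoly.aeval _ _)
      have hndvd : ¬ minpoly (ZMod p) α ∣ minpoly (ZMod p) α⁻¹ := by
        intro hdvd
        exact hne (eq_of_monic_of_associated (minpoly.monic hint1) (minpoly.monic hint2)
          ((minpoly.irreducible hint1).associated_of_dvd (minpoly.irreducible hint2) hdvd))
      have hcop : IsCoprime (minpoly (ZMod p) α) (minpoly (ZMod p) α⁻¹) :=
        ((minpoly.irreducible hint1).coprime_iff_not_dvd).mpr hndvd
      apply monic_dvd_eq hgmonic ((minpoly.monic hint1).mul (minpoly.monic hint2))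
        (hcop.mul_dvd hd1 hd2)
      rw [natDegree_mul (minpoly.ne_zero hint1) (minpoly.ne_zero hint2), hdm1, hdm2, hgdeg]
      omega
  · left
    refine ⟨hgmonic, ?_, hgdeg⟩
    set k' : GaloisField p n := algebraMap (ZMod p) (GaloisField p n) k with hk'def
    have hk'0 : k' ≠ 0 := fun h =>
      hk ((algebraMap (ZMod p) (GaloisField p n)).injective (h.trans (map_zero _).symm))
    set c : GaloisField p n := β * k'⁻¹ with hcdef
    have hkc : k' * c = β := by
      rw [hcdef]; field_simp
    set q : (GaloisField p n)[X] := X ^ 2 - C c * X + 1 with hqdef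
    have hqdeg : q.natDegree = 2 := by
      rw [hqdef]; compute_degree!
    have hq0 : q ≠ 0 := fun h => by simp [h] at hqdeg
    have hqirr : Irreducible q := by
      rw [irreducible_iff_roots_eq_zero_of_degree_le_three (by omega) (by omega)]
      by_contra hroots
      obtain ⟨x, hx⟩ := Multiset.exists_mem_of_ne_zero hroots
      rw [mem_roots hq0] at hx
      have hx' : x ^ 2 - c * x + 1 = 0 := by
        have := hx
        rw [hqdef] at this
        simpa [IsRoot] using this
      apply hA
      refine ⟨x, ?_⟩
      rw [← hkc]
      linear_combination k' * hx'
    haveI : Fact (Irreducible q) := ⟨hqirr⟩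
    have htower : ∀ z : ZMod p, algebraMap (ZMod p) (AdjoinRoot q) z =
        algebraMap (GaloisField p n) (AdjoinRoot q) (algebraMap (ZMod p) (GaloisField p n) z) :=
      fun z => IsScalarTower.algebraMap_apply (ZMod p) (GaloisField p n) (AdjoinRoot q) z
    set α : AdjoinRoot q := AdjoinRoot.root q with hαdef
    have hq0' : aeval α q = 0 := by
      rw [hαdef, AdjoinRoot.aeval_eq, AdjoinRoot.mk_self]
    have hq0'' : aeval α (X ^ 2 - C c * X + 1 : (GaloisField p n)[X]) = 0 := by
      rw [← hqdef]; exact hq0'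
    have hqα : α ^ 2 - algebraMap (GaloisField p n) (AdjoinRoot q) c * α + 1 = 0 := by
      simp only [map_add, map_sub, map_mul, map_pow, map_one, aeval_X, aeval_C] at hq0''
      exact hq0''
    have hα0 : α ≠ 0 := by
      intro h
      rw [h] at hqα
      simp at hqα
    have hkcL : algebraMap (GaloisField p n) (AdjoinRoot q) k' *
        algebraMap (GaloisField p n) (AdjoinRoot q) c =
        algebraMap (GaloisField p n) (AdjoinRoot q) β := by
      rw [← map_mul, hkc]
    have hrel : algebraMap (ZMod p) (AdjoinRoot q) k * (α ^ 2 + 1) =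
        algebraMap (GaloisField p n) (AdjoinRoot q) β * α := by
      rw [htower k, ← hk'def]
      linear_combination algebraMap (GaloisField p n) (AdjoinRoot q) k' * hqα + α * hkcL
    have hβL : aeval (algebraMap (GaloisField p n) (AdjoinRoot q) β) f = 0 := by
      rw [Polynomial.aeval_algebraMap_apply, hβ, map_zero]
    have hgα : aeval α (Qtransform k f) = 0 := qt_aeval k f hrel hβL
    haveI : Module.Finite (GaloisField p n) (AdjoinRoot q) :=
      PowerBasis.finite (AdjoinRoot.powerBasis hq0)
    haveI : Module.Finite (ZMod p) (AdjoinRoot q) :=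
      Module.Finite.trans (GaloisField p n) (AdjoinRoot q)
    have hintα : IsIntegral (ZMod p) α := IsIntegral.of_finite _ _
    have hLrank : Module.finrank (ZMod p) (AdjoinRoot q) = 2 * n := by
      have h1 : Module.finrank (GaloisField p n) (AdjoinRoot q) = 2 := by
        rw [PowerBasis.finrank (AdjoinRoot.powerBasis hq0), AdjoinRoot.powerBasis_dim, hqdeg]
      have h2 := Module.finrank_mul_finrank (ZMod p) (GaloisField p n) (AdjoinRoot q)
      rw [hKrank, h1] at h2
      omega
    have hdvd : minpoly (ZMod p) α ∣ Qtransform k f := minpoly.dvd _ _ hgα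
    have hαinvL : α⁻¹ = algebraMap (GaloisField p n) (AdjoinRoot q) c - α := by
      apply inv_eq_of_mul_eq_one_right
      linear_combination -hqα
    have hβLeq : algebraMap (GaloisField p n) (AdjoinRoot q) β =
        algebraMap (ZMod p) (AdjoinRoot q) k * α + algebraMap (ZMod p) (AdjoinRoot q) k * α⁻¹ := by
      rw [hαinvL, htower k, ← hk'def]
      linear_combination -hkcL
    have hβLmem : algebraMap (GaloisField p n) (AdjoinRoot q) β ∈
        IntermediateField.adjoin (ZMod p) {α} := by
      have hαmem := IntermediateField.mem_adjoin_simple_self (ZMod p) α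
      rw [hβLeq]
      exact add_mem (mul_mem (IntermediateField.algebraMap_mem _ k) hαmem)
        (mul_mem (IntermediateField.algebraMap_mem _ k) (inv_mem hαmem))
    have hminβL : minpoly (ZMod p) (algebraMap (GaloisField p n) (AdjoinRoot q) β) = f := by
      rw [minpoly.algebraMap_eq (algebraMap (GaloisField p n) (AdjoinRoot q)).injective, hmin]
    have hfinβL : Module.finrank (ZMod p)
        (IntermediateField.adjoin (ZMod p) {algebraMap (GaloisField p n) (AdjoinRoot q) β}) = n := by
      rw [IntermediateField.adjoin.finrank (IsIntegral.of_finite _ _), hminβL]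
    have hle : IntermediateField.adjoin (ZMod p) {algebraMap (GaloisField p n) (AdjoinRoot q) β} ≤
        IntermediateField.adjoin (ZMod p) {α} := by
      rw [IntermediateField.adjoin_le_iff]
      intro z hz
      rw [Set.mem_singleton_iff] at hz; subst hz
      exact hβLmem
    have hlow : n ≤ (minpoly (ZMod p) α).natDegree := by
      have hincinj : Function.Injective (IntermediateField.inclusion hle).toLinearMap :=
        (IntermediateField.inclusion hle).toRingHom.injective
      have h7 := LinearMap.finrank_le_finrank_of_injective hincinj
      rw [hfinβL, IntermediateField.adjoin.finrank hintα] at h7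
      exact h7
    have hdvd2n : (minpoly (ZMod p) α).natDegree ∣ 2 * n := by
      rw [← hLrank]
      exact minpoly.degree_dvd hintα
    have hne_n : (minpoly (ZMod p) α).natDegree ≠ n := by
      intro hdn
      have hEeq : IntermediateField.adjoin (ZMod p) {algebraMap (GaloisField p n) (AdjoinRoot q) β} =
          IntermediateField.adjoin (ZMod p) {α} := by
        apply IntermediateField.eq_of_le_of_finrank_le hle
        rw [IntermediateField.adjoin.finrank hintα, hdn, hfinβL]
      have hαmemβ : α ∈ IntermediateField.adjoin (ZMod p)
          {algebraMap (GaloisField p n) (AdjoinRoot q) β} := by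
        rw [hEeq]
        exact IntermediateField.mem_adjoin_simple_self (ZMod p) α
      have hsubKim : IntermediateField.adjoin (ZMod p)
          {algebraMap (GaloisField p n) (AdjoinRoot q) β} ≤
          (IsScalarTower.toAlgHom (ZMod p) (GaloisField p n) (AdjoinRoot q)).fieldRange := by
        rw [IntermediateField.adjoin_le_iff]
        intro z hz
        rw [Set.mem_singleton_iff] at hz; subst hz
        exact ⟨β, rfl⟩
      obtain ⟨α₀, hα₀⟩ := hsubKim hαmemβ
      apply hA
      refine ⟨α₀, ?_⟩
      apply (algebraMap (GaloisField p n) (AdjoinRoot q)).injective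
      have hα₀' : algebraMap (GaloisField p n) (AdjoinRoot q) α₀ = α := hα₀
      rw [map_mul, map_mul, map_add, map_pow, map_one, hα₀', ← htower k]
      exact hrel
    have hdeg2n : (minpoly (ZMod p) α).natDegree = 2 * n := by
      obtain ⟨d, hd⟩ := hdvd2n
      have hpos : 0 < (minpoly (ZMod p) α).natDegree := by omega
      rcases Nat.lt_or_ge d 2 with hd2 | hd2
      · interval_cases d
        · omega
        · omega
      · exfalso
        have h8 : (minpoly (ZMod p) α).natDegree * 2 ≤ (minpoly (ZMod p) α).natDegree * d :=
          Nat.mul_le_mul_left _ hd2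
        rw [← hd] at h8
        exact hne_n (by omega)
    have heq : Qtransform k f = minpoly (ZMod p) α :=
      monic_dvd_eq hgmonic (minpoly.monic hintα) hdvd (by rw [hdeg2n, hgdeg])
    rw [heq]
    exact minpoly.irreducible hintα
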